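/- arXiv:1706.00182 — 3 statements merged into one kernel-verified Lean document; each statement's English description precedes it below -/
import Mathlib

section
/- The Gudermannian-type function ψ(u) = 2·arctan(exp(u)) − π/2 satisfies the Catoni-type bounds −log(1 − u + 2u²) ≤ ψ(u) ≤ log(1 + u + 2u²) for all real u. -/
open Real Set

private lemma quad_pos (u : ℝ) : (0:ℝ) < 1 + u + 2 * u ^ 2 := by
  nlinarith [sq_nonneg (2*u+1)]

private lemma core_pos (u : ℝ) (hu : 0 ≤ u) :
    2 * exp u * (1 + u + 2 * u ^ 2) ≤ (1 + 4 * u) * (1 + (exp u) ^ 2) := by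
  have ha : (0:ℝ) < exp u := exp_pos u
  have hb : (0:ℝ) < exp (-u) := exp_pos _
  have hab : exp u * exp (-u) = 1 := by rw [← exp_add]; simp
  have hs : (1 + u/2)^2 ≤ exp u := by
    have h1 : 1 + u/2 ≤ exp (u/2) := by linarith [add_one_le_exp (u/2)]
    have h2 : exp (u/2) * exp (u/2) = exp u := by rw [← exp_add]; ring_nf
    nlinarith [exp_pos (u/2)]
  have hbl : 1 - u ≤ exp (-u) := by linarith [add_one_le_exp (-u)]
  nlinarith [mul_pos ha hb, sq_nonneg u, mul_nonneg hu hu,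
    mul_nonneg (mul_nonneg hu hu) hu,
    mul_le_mul_of_nonneg_left hs (le_of_lt ha),
    mul_le_mul_of_nonneg_left hbl (le_of_lt ha)]

private lemma core_neg (u : ℝ) (hu : u ≤ 0) :
    (1 + 4 * u) * (1 + (exp u) ^ 2) ≤ 2 * exp u * (1 + u + 2 * u ^ 2) := by
  have ha : (0:ℝ) < exp u := exp_pos u
  have hb : (0:ℝ) < exp (-u) := exp_pos _
  have hab : exp u * exp (-u) = 1 := by rw [← exp_add]; simp
  rcases le_or_gt u (-1/4) with h | h
  · have h1 : 1 + 4*u ≤ 0 := by linarith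
    have h2 : (0:ℝ) < 1 + u + 2*u^2 := quad_pos u
    nlinarith [sq_nonneg (exp u), mul_pos ha h2]
  · have hA : exp u ≤ 1 + u + u^2 := by
      have h1 : 1 - u ≤ exp (-u) := by linarith [add_one_le_exp (-u)]
      have h2 : exp u * (1 - u) ≤ 1 := by
        calc exp u * (1 - u) ≤ exp u * exp (-u) :=
              mul_le_mul_of_nonneg_left h1 (le_of_lt ha)
          _ = 1 := hab
      nlinarith
    have hB : exp (-u) ≤ 1 - u + (4/3) * u^2 := by
      have h1 : 1 + u ≤ exp u := by linarith [add_one_le_exp u]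
      have h2 : exp (-u) * (1 + u) ≤ 1 := by
        calc exp (-u) * (1 + u) ≤ exp (-u) * exp u :=
              mul_le_mul_of_nonneg_left h1 (le_of_lt hb)
          _ = 1 := by rw [mul_comm]; exact hab
      nlinarith
    have h14 : (0:ℝ) ≤ 1 + 4*u := by linarith
    nlinarith [mul_le_mul_of_nonneg_left hA (le_of_lt ha),
      mul_le_mul_of_nonneg_left hB (le_of_lt ha),
      mul_nonneg (mul_nonneg h14 (neg_nonneg.mpr hu)) (neg_nonneg.mpr hu)]

private lemma F_hasDeriv (u : ℝ) :
    HasDerivAt (fun u : ℝ => Real.log (1 + u + 2 * u ^ 2) - (2 * Real.arctan (Real.exp u) - Real.pi / 2))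
      ((1 + 4 * u) / (1 + u + 2 * u ^ 2) - 2 * (1 / (1 + (Real.exp u) ^ 2) * Real.exp u)) u := by
  have h1 : HasDerivAt (fun u : ℝ => 1 + u + 2 * u ^ 2) (1 + 4 * u) u := by
    have := ((hasDerivAt_id u).const_add 1).add ((hasDerivAt_pow 2 u).const_mul 2)
    exact this.congr_deriv (by simp; ring)
  have h2 : HasDerivAt (fun u : ℝ => Real.log (1 + u + 2 * u ^ 2))
      ((1 + 4 * u) / (1 + u + 2 * u ^ 2)) u := h1.log (ne_of_gt (quad_pos u))
  have h3 : HasDerivAt (fun u : ℝ => Real.arctan (Real.exp u))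
      (1 / (1 + (Real.exp u) ^ 2) * Real.exp u) u :=
    (Real.hasDerivAt_arctan (Real.exp u)).comp u (Real.hasDerivAt_exp u)
  exact h2.sub ((h3.const_mul 2).sub_const _)

private lemma upper_bound (u : ℝ) :
    2 * Real.arctan (Real.exp u) - Real.pi / 2 ≤ Real.log (1 + u + 2 * u ^ 2) := by
  set F : ℝ → ℝ := fun u =>
    Real.log (1 + u + 2 * u ^ 2) - (2 * Real.arctan (Real.exp u) - Real.pi / 2) with hF
  have hd : ∀ x : ℝ, HasDerivAt F
      ((1 + 4 * x) / (1 + x + 2 * x ^ 2) - 2 * (1 / (1 + (Real.exp x) ^ 2) * Real.exp x)) x :=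
    fun x => F_hasDeriv x
  have hdiff : Differentiable ℝ F := fun x => (hd x).differentiableAt
  have hderiv : ∀ x : ℝ, deriv F x =
      (1 + 4 * x) / (1 + x + 2 * x ^ 2) - 2 * (1 / (1 + (Real.exp x) ^ 2) * Real.exp x) :=
    fun x => (hd x).deriv
  have hden : ∀ x : ℝ, (0:ℝ) < 1 + (Real.exp x) ^ 2 := fun x => by positivity
  have hF0 : F 0 = 0 := by
    simp [hF, Real.arctan_one]
    ring
  have key : 0 ≤ F u := by
    rcases le_total 0 u with hu | hu
    · have hmono : MonotoneOn F (Ici (0:ℝ)) := by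
        apply monotoneOn_of_deriv_nonneg (convex_Ici 0) hdiff.continuous.continuousOn
          (hdiff.differentiableOn)
        intro x hx
        rw [interior_Ici] at hx
        rw [hderiv x, sub_nonneg,
          show 2 * (1 / (1 + Real.exp x ^ 2) * Real.exp x)
            = (2 * Real.exp x) / (1 + Real.exp x ^ 2) from by ring,
          div_le_div_iff₀ (hden x) (quad_pos x)]
        have hx' : (0:ℝ) ≤ x := le_of_lt hx
        nlinarith [core_pos x hx']
      have := hmono (self_mem_Ici) (mem_Ici.mpr hu) hu
      rw [hF0] at this; exact this
    · have hanti : AntitoneOn F (Iic (0:ℝ)) := by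
        apply antitoneOn_of_deriv_nonpos (convex_Iic 0) hdiff.continuous.continuousOn
          (hdiff.differentiableOn)
        intro x hx
        rw [interior_Iic] at hx
        rw [hderiv x, sub_nonpos,
          show 2 * (1 / (1 + Real.exp x ^ 2) * Real.exp x)
            = (2 * Real.exp x) / (1 + Real.exp x ^ 2) from by ring,
          div_le_div_iff₀ (quad_pos x) (hden x)]
        have hx' : x ≤ 0 := le_of_lt hx
        nlinarith [core_neg x hx']
      have := hanti (mem_Iic.mpr hu) (self_mem_Iic) hu
      rw [hF0] at this; exact this
  simpa [hF, sub_nonneg] using key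

theorem gudermannian_catoni_bounds (u : ℝ) :
    -Real.log (1 - u + 2 * u ^ 2) ≤ 2 * Real.arctan (Real.exp u) - Real.pi / 2 ∧
    2 * Real.arctan (Real.exp u) - Real.pi / 2 ≤ Real.log (1 + u + 2 * u ^ 2) := by
  constructor
  · have h := upper_bound (-u)
    have harc : Real.arctan (Real.exp (-u)) = Real.pi / 2 - Real.arctan (Real.exp u) := by
      rw [Real.exp_neg]
      exact Real.arctan_inv_of_pos (Real.exp_pos u)
    rw [harc] at h
    have : 1 + -u + 2 * (-u) ^ 2 = 1 - u + 2 * u ^ 2 := by ring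
    rw [this] at h
    linarith
  · exact upper_bound u
end

section
/- Let σ² ≥ 0, s > 0, C > 0, n ≥ 1 and δ ∈ (0,1) satisfy D := 4(C²σ²/s² + C·log(1/δ)/n) ≤ 1. Then the quadratic (in u) equation m − u + (C/s)(σ² + (m − u)²) + (s/n)·log(1/δ) = 0 has two real solutions, and the smaller solution u₊ satisfies u₊ ≤ m + sD/(2C). -/
theorem catoni_quadratic_roots (m σ2 s C : ℝ) (n : ℕ) (δ : ℝ)
    (hσ2 : 0 ≤ σ2) (hs : 0 < s) (hC : 0 < C) (hn : 1 ≤ n) (hδ : δ ∈ Set.Ioo (0:ℝ) 1)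
    (hD : 4 * (C ^ 2 * σ2 / s ^ 2 + C * Real.log (1 / δ) / n) ≤ 1) :
    ∃ u₁ u₂ : ℝ, u₁ ≤ u₂ ∧
      (m - u₁ + (C / s) * (σ2 + (m - u₁) ^ 2) + (s / n) * Real.log (1 / δ) = 0) ∧
      (m - u₂ + (C / s) * (σ2 + (m - u₂) ^ 2) + (s / n) * Real.log (1 / δ) = 0) ∧
      (∀ u : ℝ, m - u + (C / s) * (σ2 + (m - u) ^ 2) + (s / n) * Real.log (1 / δ) = 0 →
        u₁ ≤ u) ∧
      u₁ ≤ m + s * (4 * (C ^ 2 * σ2 / s ^ 2 + C * Real.log (1 / δ) / n)) / (2 * C) := by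
  obtain ⟨hδ0, hδ1⟩ := hδ
  set L := Real.log (1 / δ) with hLdef
  have hL : 0 < L := Real.log_pos (by rw [lt_div_iff₀ hδ0]; linarith)
  have hnp : (0:ℝ) < n := by exact_mod_cast Nat.lt_of_lt_of_le Nat.zero_lt_one hn
  set D := 4 * (C ^ 2 * σ2 / s ^ 2 + C * L / n) with hDdef
  have hD0 : 0 ≤ D := by
    have h1 : 0 ≤ C ^ 2 * σ2 / s ^ 2 := by positivity
    have h2 : 0 ≤ C * L / n := by positivity
    nlinarith
  have hD1 : D ≤ 1 := hD
  set r := Real.sqrt (1 - D) with hrdef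
  have hr0 : 0 ≤ r := Real.sqrt_nonneg _
  have hr2 : r ^ 2 = 1 - D := Real.sq_sqrt (by linarith)
  have hr1 : r ≤ 1 := by nlinarith
  have hsne : s ≠ 0 := hs.ne'
  have hCne : C ≠ 0 := hC.ne'
  have hnne : (n:ℝ) ≠ 0 := hnp.ne'
  have hle : m + s * (1 - r) / (2 * C) ≤ m + s * (1 + r) / (2 * C) := by
    gcongr <;> linarith
  refine ⟨m + s * (1 - r) / (2 * C), m + s * (1 + r) / (2 * C), hle, ?_, ?_, ?_, ?_⟩
  · field_simp
    rw [hDdef] at hr2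
    field_simp at hr2
    linear_combination hr2
  · field_simp
    rw [hDdef] at hr2
    field_simp at hr2
    linear_combination hr2
  · intro u hu
    have hr2' : r ^ 2 = 1 - 4 * (C ^ 2 * σ2 / s ^ 2 + C * L / n) := by rw [hr2, hDdef]
    have K : ((m - u) * (2 * C) - s * (-1 + r)) * ((m - u) * (2 * C) - s * (-1 - r)) = 0 := by
      field_simp at hu hr2'
      have K2 : (s ^ 2 * (n : ℝ)) *
          (((m - u) * (2 * C) - s * (-1 + r)) * ((m - u) * (2 * C) - s * (-1 - r))) = 0 := by
        linear_combination 4 * C * s ^ 2 * hu - s ^ 2 * hr2'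
      rcases mul_eq_zero.mp K2 with h0 | h0
      · exact absurd h0 (by positivity)
      · exact h0
    have key : (m - u - s * (-1 + r) / (2 * C)) * (m - u - s * (-1 - r) / (2 * C)) = 0 := by
      have e : (m - u - s * (-1 + r) / (2 * C)) * (m - u - s * (-1 - r) / (2 * C)) =
          (((m - u) * (2 * C) - s * (-1 + r)) * ((m - u) * (2 * C) - s * (-1 - r))) / (2 * C) ^ 2 := by
        field_simp
      rw [e, K, zero_div]
    rcases mul_eq_zero.mp key with h | h
    · have e : s * (1 - r) / (2 * C) = -(s * (-1 + r) / (2 * C)) := by ring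
      linarith [sub_eq_zero.mp h]
    · have e : m - s * (-1 - r) / (2 * C) = m + s * (1 + r) / (2 * C) := by ring
      have h' := sub_eq_zero.mp h
      have : u = m + s * (1 + r) / (2 * C) := by linarith [e]
      linarith
  · gcongr <;> nlinarith [mul_nonneg hr0 (sub_nonneg.mpr hr1)]
end

section
/- Suppose for each u ∈ ℝ the event {(s/n)Σᵢ ψₛ(xᵢ − u) ≤ b(u) + (s/n)log(1/δ)} holds, where b(u) = m − u + (C/s)(σ² + (m−u)²), ψ is strictly increasing, and θ̂ satisfies Σᵢ ψₛ(xᵢ − θ̂) = 0. If D := 4(C²σ²/s² + C log(1/δ)/n) ≤ 1, then on the intersection of this event at u₊ (the smaller root of b(u) + (s/n)log(1/δ) = 0) with the symmetric lower-tail event, one has |θ̂ − m| ≤ 2(Cσ²/s + s·log(1/δ)/n). -/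
theorem mest_deviation_bound {n : ℕ} (hn : 1 ≤ n) (x : Fin n → ℝ)
    (ψ : ℝ → ℝ) (hψ : StrictMono ψ) (s C δ m σ2 : ℝ)
    (hs : 0 < s) (hC : 0 < C) (hδ : δ ∈ Set.Ioo (0:ℝ) 1) (hσ2 : 0 ≤ σ2)
    (hD : 4 * (C ^ 2 * σ2 / s ^ 2 + C * Real.log (1 / δ) / n) ≤ 1)
    (hub : ∀ u : ℝ, (s / n) * ∑ i, ψ ((x i - u) / s) ≤
      (m - u + (C / s) * (σ2 + (m - u) ^ 2)) + (s / n) * Real.log (1 / δ))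
    (hlb : ∀ u : ℝ, (m - u - (C / s) * (σ2 + (m - u) ^ 2)) - (s / n) * Real.log (1 / δ) ≤
      (s / n) * ∑ i, ψ ((x i - u) / s))
    (θhat : ℝ) (hroot : ∑ i, ψ ((x i - θhat) / s) = 0) :
    |θhat - m| ≤ 2 * (C * σ2 / s + s * Real.log (1 / δ) / n) := by
  have hn' : (0:ℝ) < n := by exact_mod_cast Nat.lt_of_lt_of_le Nat.zero_lt_one hn
  set L : ℝ := Real.log (1 / δ) with hLdef
  have hL : 0 ≤ L := by
    apply Real.log_nonneg
    rw [le_div_iff₀ hδ.1]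
    linarith [hδ.2]
  set B : ℝ := 2 * (C * σ2 / s + s * L / n) with hBdef
  have hB : 0 ≤ B := by
    have h1 : 0 ≤ C * σ2 / s := by positivity
    have h2 : 0 ≤ s * L / n := by positivity
    simp only [hBdef]; linarith
  have hkey : (C / s) * B ≤ 1 / 2 := by
    have h1 : (C / s) * B = 2 * (C ^ 2 * σ2 / s ^ 2 + C * L / n) := by
      rw [hBdef]; field_simp
    rw [h1]; linarith
  have hsn : 0 < s / n := by positivity
  -- strict antitonicity of the sum
  have hanti : StrictAnti (fun u : ℝ => ∑ i, ψ ((x i - u) / s)) := by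
    intro u v huv
    apply Finset.sum_lt_sum_of_nonempty
    · exact Finset.univ_nonempty_iff.mpr ⟨⟨0, hn⟩⟩
    · intro i _
      exact hψ ((div_lt_div_iff_of_pos_right hs).mpr (by linarith))
  -- the key algebraic fact at both endpoints
  have halg : (C / s) * (σ2 + B ^ 2) + s / n * L ≤ B := by
    have h2 : (C / s) * B ^ 2 ≤ (1 / 2) * B := by
      calc (C / s) * B ^ 2 = ((C / s) * B) * B := by ring
        _ ≤ (1 / 2) * B := mul_le_mul_of_nonneg_right hkey hB
    have h3 : (C / s) * σ2 + s / n * L = B / 2 := by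
      simp only [hBdef]; ring
    nlinarith
  -- upper bound: θhat ≤ m + B
  have hup : θhat ≤ m + B := by
    have h1 := hub (m + B)
    have h2 : (s / n) * ∑ i, ψ ((x i - (m + B)) / s) ≤ 0 := by
      have : m - (m + B) = -B := by ring
      rw [this] at h1
      nlinarith [halg]
    have h3 : ∑ i, ψ ((x i - (m + B)) / s) ≤ 0 := by
      by_contra hpos
      push_neg at hpos
      nlinarith
    by_contra hlt
    push_neg at hlt
    have := hanti hlt
    simp only at this
    rw [hroot] at this
    linarith
  -- lower bound: m - B ≤ θhat
  have hlow : m - B ≤ θhat := by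
    have h1 := hlb (m - B)
    have h2 : 0 ≤ (s / n) * ∑ i, ψ ((x i - (m - B)) / s) := by
      have : m - (m - B) = B := by ring
      rw [this] at h1
      nlinarith [halg]
    have h3 : 0 ≤ ∑ i, ψ ((x i - (m - B)) / s) := by
      by_contra hneg
      push_neg at hneg
      nlinarith
    by_contra hlt
    push_neg at hlt
    have := hanti hlt
    simp only at this
    rw [hroot] at this
    linarith
  rw [abs_le]
  constructor <;> simp only [hBdef] at hup hlow <;> linarith
end
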